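/- If q is the principal denominator sequence of an irrational α ∈ (0,1) and sup_n q_{n+1}/q_n = ∞, then G₁(q) = {t ∈ ℝ/ℤ : ∑_n ‖q_n t‖ < ∞} is uncountable. -/

import Mathlib

open Finset

namespace Stmt5Aux

structure Hyp (a q : ℕ → ℕ) : Prop where
  ha : ∀ n, 1 ≤ n → 1 ≤ a n
  hq0 : q 0 = 1
  hq1 : q 1 = a 1
  hrec : ∀ n, q (n + 2) = a (n + 2) * q (n + 1) + q n

variable {a q : ℕ → ℕ} (H : Hyp a q)
include H

theorem qpos : ∀ n, 1 ≤ q n := by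
  have key : ∀ n, 1 ≤ q n ∧ 1 ≤ q (n+1) := by
    intro n
    induction n with
    | zero => exact ⟨by simp [H.hq0], by rw [H.hq1]; exact H.ha 1 le_rfl⟩
    | succ n ih =>
      refine ⟨ih.2, ?_⟩
      rw [H.hrec n]
      have := ih.1
      omega
  exact fun n => (key n).1

theorem qadd : ∀ n, q (n+1) + q n ≤ q (n+2) := by
  intro n
  rw [H.hrec n]
  have h1 : 1 ≤ a (n+2) := H.ha (n+2) (by omega)
  nlinarith [qpos H (n+1)]

theorem qmono : Monotone q := by
  apply monotone_nat_of_le_succ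
  intro n
  match n with
  | 0 => rw [H.hq0, H.hq1]; exact H.ha 1 le_rfl
  | (m+1) =>
    show q (m+1) ≤ q (m+2)
    have := qadd H m; have := qpos H m; omega

theorem qdouble : ∀ n, 2 * q n ≤ q (n+2) := by
  intro n
  have h1 := qadd H n
  have h2 := qmono H (by omega : n ≤ n+1)
  omega

theorem qpow : ∀ i n, 2^i * q n ≤ q (n + 2*i) := by
  intro i
  induction i with
  | zero => simp
  | succ i ih =>
    intro n
    have h1 := ih (n+2)
    have h2 := qdouble H n
    have : n + 2 + 2*i = n + 2*(i+1) := by ring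
    rw [this] at h1
    calc 2^(i+1) * q n = 2^i * (2 * q n) := by ring
    _ ≤ 2^i * q (n+2) := by exact Nat.mul_le_mul_left _ h2
    _ ≤ q (n + 2*(i+1)) := h1

theorem sumq : ∀ m, ∑ n ∈ range (m+1), q n ≤ 4 * q m := by
  have key : ∀ m, (∑ n ∈ range (m+1), q n ≤ 4 * q m) ∧
      (∑ n ∈ range (m+2), q n ≤ 4 * q (m+1)) := by
    intro m
    induction m with
    | zero =>
      constructor
      · simp [H.hq0]
      · rw [sum_range_succ, sum_range_one, H.hq0]
        have : 1 ≤ q 1 := qpos H 1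
        show 1 + q 1 ≤ 4 * q 1
        omega
    | succ m ih =>
      refine ⟨ih.2, ?_⟩
      show ∑ n ∈ range (m+3), q n ≤ 4 * q (m+2)
      rw [show m+3 = (m+2)+1 from rfl, sum_range_succ,
        show m+2 = (m+1)+1 from rfl, sum_range_succ]
      rw [show q (m+1+1) = q (m+2) from rfl]
      have h1 : ∑ n ∈ range (m+1), q n ≤ 4 * q m := ih.1
      have h2 := qdouble H m
      have h3 := qmono H (by omega : m+1 ≤ m+2)
      omega
  exact fun m => (key m).1

theorem qposR (n : ℕ) : (0:ℝ) < q n := by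
  exact_mod_cast Nat.lt_of_lt_of_le Nat.zero_lt_one (qpos H n)

theorem sum_inv_le : ∀ R m, ∑ i ∈ range R, ((q (m+i):ℝ))⁻¹ ≤ 2/q m + 2/q (m+1) := by
  intro R
  induction R with
  | zero =>
    intro m
    simp
    positivity
  | succ R ih =>
    intro m
    rw [sum_range_succ']
    have h1 : ∑ i ∈ range R, ((q (m+(i+1)):ℝ))⁻¹ ≤ 2/q (m+1) + 2/q (m+2) := by
      have := ih (m+1)
      refine le_trans (le_of_eq ?_) this
      apply Finset.sum_congr rfl
      intro i _
      rw [show m+(i+1) = m+1+i from by omega]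
    have h2 : (2:ℝ)/q (m+2) ≤ 1/q m := by
      rw [div_le_div_iff₀ (qposR H _) (qposR H _)]
      have := qdouble H m
      have : (2 * q m : ℝ) ≤ q (m+2) := by exact_mod_cast this
      nlinarith
    have h3 : ((q (m+0):ℝ))⁻¹ = 1/q m := by norm_num
    rw [h3]
    have h4 : (1:ℝ)/q m + 1/q m ≤ 2/q m := by ring_nf; rfl
    calc ∑ i ∈ range R, ((q (m+(i+1)):ℝ))⁻¹ + 1/q m
        ≤ (2/q (m+1) + 2/q (m+2)) + 1/q m := by linarith
      _ ≤ 2/q m + 2/q (m+1) := by linarith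

theorem summable_inv_shift (m : ℕ) : Summable (fun i => ((q (m+i):ℝ))⁻¹) := by
  apply summable_of_sum_range_le (c := 2/q m + 2/q (m+1))
  · intro n; positivity
  · intro n; exact sum_inv_le H n m

theorem tsum_inv_le (m : ℕ) : ∑' i, ((q (m+i):ℝ))⁻¹ ≤ 4 / q m := by
  have h1 : ∑' i, ((q (m+i):ℝ))⁻¹ ≤ 2/q m + 2/q (m+1) :=
    Summable.tsum_le_of_sum_range_le (summable_inv_shift H m) (fun n => sum_inv_le H n m)
  have h2 : (2:ℝ)/q (m+1) ≤ 2/q m := by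
    apply div_le_div_of_nonneg_left (by norm_num) (qposR H m)
    exact_mod_cast qmono H (by omega : m ≤ m+1)
  have : (2:ℝ)/q m + 2/q m = 4/q m := by ring
  linarith

def pp (a : ℕ → ℕ) : ℕ → ℤ × ℤ
  | 0 => (0, 1)
  | n+1 => ((pp a n).2, (a (n+2) : ℤ) * (pp a n).2 + (pp a n).1)

def p (a : ℕ → ℕ) (n : ℕ) : ℤ := (pp a n).1

omit H in
theorem p_zero : p a 0 = 0 := rfl
omit H in
theorem p_one : p a 1 = 1 := rfl
omit H in
theorem p_rec (n : ℕ) : p a (n+2) = (a (n+2) : ℤ) * p a (n+1) + p a n := rfl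

theorem det : ∀ n, p a (n+1) * (q n : ℤ) - p a n * (q (n+1) : ℤ) = (-1)^n := by
  intro n
  induction n with
  | zero => simp [p_zero (a := a), p_one (a := a), H.hq0]
  | succ n ih =>
    calc p a (n+2) * (q (n+1) : ℤ) - p a (n+1) * (q (n+2) : ℤ)
        = -(p a (n+1) * (q n : ℤ) - p a n * (q (n+1) : ℤ)) := by
          rw [p_rec, H.hrec n]; push_cast; ring
      _ = -(-1)^n := by rw [ih]
      _ = (-1)^(n+1) := by ring

/-- `c n = 1/(qₙ qₙ₊₁)`. -/
noncomputable def cc (q : ℕ → ℕ) (n : ℕ) : ℝ := ((q n : ℝ) * q (n+1))⁻¹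

theorem cpos (n : ℕ) : 0 < cc q n := by
  have := qposR H n; have := qposR H (n+1)
  unfold cc; positivity

theorem cantitone {n m : ℕ} (h : n ≤ m) : cc q m ≤ cc q n := by
  unfold cc
  apply inv_anti₀
  · have := qposR H n; have := qposR H (n+1); positivity
  · have h1 : (q n : ℝ) ≤ q m := by exact_mod_cast qmono H h
    have h2 : (q (n+1) : ℝ) ≤ q (m+1) := by exact_mod_cast qmono H (by omega)
    have := qposR H n; have := qposR H (n+1)
    nlinarith

theorem cle (n : ℕ) : cc q n ≤ ((q n:ℝ))⁻¹ := by
  unfold cc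
  rw [mul_inv]
  have h1 : ((q (n+1):ℝ))⁻¹ ≤ 1 := by
    rw [inv_le_one_iff₀]; right; exact_mod_cast qpos H (n+1)
  have h0 : (0:ℝ) ≤ ((q n:ℝ))⁻¹ := by positivity
  nlinarith

theorem summable_c (n : ℕ) : Summable (fun i => cc q (n+i)) := by
  apply Summable.of_nonneg_of_le (fun i => (cpos H _).le) (fun i => cle H _)
  exact summable_inv_shift H n

theorem summable_signed_c (n : ℕ) : Summable (fun i => (-1:ℝ)^i * cc q (n+i)) := by
  apply Summable.of_abs
  have : ∀ i, |(-1:ℝ)^i * cc q (n+i)| = cc q (n+i) := by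
    intro i
    rw [abs_mul, abs_pow, abs_neg, abs_one, one_pow, one_mul,
      abs_of_pos (cpos H _)]
  simpa [this] using summable_c H n

theorem summable_c_even (n : ℕ) : Summable (fun j => cc q (n+2*j)) := by
  have hgeo : Summable (fun j : ℕ => ((1:ℝ)/2)^j) :=
    summable_geometric_of_lt_one (by norm_num) (by norm_num)
  apply Summable.of_nonneg_of_le (fun j => (cpos H _).le) ?_ hgeo
  · intro j
    have h1 : cc q (n+2*j) ≤ ((q (n+2*j):ℝ))⁻¹ := cle H _
    have h2 : (2:ℕ)^j * 1 ≤ q (n + 2*j) := by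
      calc (2:ℕ)^j * 1 ≤ 2^j * q n := Nat.mul_le_mul_left _ (qpos H n)
      _ ≤ q (n + 2*j) := qpow H j n
    have h2' : ((2:ℝ))^j ≤ q (n+2*j) := by exact_mod_cast by omega
    have h3 : ((q (n+2*j):ℝ))⁻¹ ≤ ((2:ℝ)^j)⁻¹ := by
      apply inv_anti₀ (by positivity) h2'
    calc cc q (n+2*j) ≤ ((q (n+2*j):ℝ))⁻¹ := h1
      _ ≤ ((2:ℝ)^j)⁻¹ := h3
      _ = ((1:ℝ)/2)^j := by rw [one_div, inv_pow]

theorem summable_c_odd (n : ℕ) : Summable (fun j => cc q (n+2*j+1)) := by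
  exact (summable_c_even H (n+1)).congr
    (fun j => by rw [show n+1+2*j = n+2*j+1 from by omega])

/-- the alternating tail `Uₙ = Σ_i (-1)^i c_{n+i}`. -/
noncomputable def U (q : ℕ → ℕ) (n : ℕ) : ℝ := ∑' i, (-1:ℝ)^i * cc q (n+i)

theorem U_split (n : ℕ) :
    U q n = (∑' j, cc q (n+2*j)) - ∑' j, cc q (n+2*j+1) := by
  have he : Summable (fun j => (-1:ℝ)^(2*j) * cc q (n+2*j)) :=
    (summable_c_even H n).congr (fun j => by
      rw [pow_mul]; norm_num)
  have ho : Summable (fun j => (-1:ℝ)^(2*j+1) * cc q (n+(2*j+1))) :=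
    ((summable_c_odd H n).neg).congr (fun j => by
      rw [show n+(2*j+1) = n+2*j+1 from by omega, pow_succ, pow_mul]; norm_num)
  have key := tsum_even_add_odd (f := fun i => (-1:ℝ)^i * cc q (n+i)) he ho
  beta_reduce at key
  unfold U
  rw [← key]
  have e1 : ∀ k : ℕ, (-1:ℝ)^(2*k) * cc q (n+2*k) = cc q (n+2*k) := by
    intro k; rw [pow_mul]; norm_num
  have e2 : ∀ k : ℕ, (-1:ℝ)^(2*k+1) * cc q (n+(2*k+1)) = -(cc q (n+2*k+1)) := by
    intro k
    rw [show n+(2*k+1) = n+2*k+1 from by omega, pow_succ, pow_mul]; norm_num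
  rw [tsum_congr e1, tsum_congr e2, tsum_neg]
  ring

theorem U_nonneg (n : ℕ) : 0 ≤ U q n := by
  rw [U_split H n]
  rw [sub_nonneg]
  apply Summable.tsum_le_tsum _ (summable_c_odd H n) (summable_c_even H n)
  intro j
  exact cantitone H (by omega)

theorem U_peel (n : ℕ) : U q n = cc q n - U q (n+1) := by
  have h := Summable.tsum_eq_zero_add (summable_signed_c H n)
  unfold U
  rw [h]
  have h2 : ∀ i, (-1:ℝ)^(i+1) * cc q (n+(i+1)) = -((-1)^i * cc q ((n+1)+i)) := by
    intro i
    rw [show n+(i+1) = (n+1)+i from by omega, pow_succ]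
    ring
  rw [tsum_congr h2, tsum_neg]
  simp only [pow_zero, one_mul, Nat.add_zero]
  ring

theorem U_ub (n : ℕ) : U q n ≤ cc q n := by
  have := U_nonneg H (n+1)
  rw [U_peel H n]
  linarith

theorem U_lb (n : ℕ) : cc q n - cc q (n+1) ≤ U q n := by
  have := U_ub H (n+1)
  rw [U_peel H n]
  linarith

/-- `α` -/
noncomputable def al (q : ℕ → ℕ) : ℝ := ∑' m, (-1:ℝ)^m * cc q m

/-- `ηₙ = qₙ α - pₙ` -/
noncomputable def eta (a q : ℕ → ℕ) (n : ℕ) : ℝ := (q n : ℝ) * al q - p a n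

theorem summable_al : Summable (fun m => (-1:ℝ)^m * cc q m) :=
  (summable_signed_c H 0).congr (fun i => by rw [Nat.zero_add])

theorem Pkey : ∀ n, (p a n : ℝ) = (q n : ℝ) * ∑ m ∈ range n, (-1:ℝ)^m * cc q m := by
  intro n
  induction n with
  | zero => simp [p_zero (a := a)]
  | succ n ih =>
    rw [sum_range_succ, mul_add]
    have hdet := det H n
    have hq1 : (q n : ℝ) ≠ 0 := (qposR H n).ne'
    have hq2 : (q (n+1) : ℝ) ≠ 0 := (qposR H (n+1)).ne'
    have hdet' : (p a (n+1) : ℝ) * q n - p a n * q (n+1) = (-1)^n := by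
      exact_mod_cast congrArg (Int.cast : ℤ → ℝ) hdet
    have ih' : (q (n+1) : ℝ) * ∑ m ∈ range n, (-1:ℝ)^m * cc q m
        = q (n+1) * (p a n) / q n := by
      rw [ih]; field_simp
    rw [ih']
    have key : (q (n+1) : ℝ) * ((-1:ℝ)^n * cc q n) = ((-1:ℝ)^n) / q n := by
      unfold cc
      rw [mul_inv]
      field_simp
    rw [key, ← add_div, eq_div_iff hq1]
    linear_combination hdet'

theorem eta_eq (n : ℕ) : eta a q n = (q n : ℝ) * ((-1)^n * U q n) := by
  have hsplit : ∑ i ∈ range n, (-1:ℝ)^i * cc q i + ∑' i, (-1:ℝ)^(i+n) * cc q (i+n) = al q := by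
    simpa [al] using Summable.sum_add_tsum_nat_add (f := fun m => (-1:ℝ)^m * cc q m) n (summable_al H)
  have htail : ∑' i, (-1:ℝ)^(i+n) * cc q (i+n) = (-1)^n * U q n := by
    have h1 : ∀ i, (-1:ℝ)^(i+n) * cc q (i+n) = (-1)^n * ((-1)^i * cc q (n+i)) := by
      intro i
      rw [show i+n = n+i from by omega, pow_add]
      ring
    rw [tsum_congr h1, tsum_mul_left]
    rfl
  unfold eta
  rw [Pkey H n]
  have : al q - ∑ m ∈ range n, (-1:ℝ)^m * cc q m = (-1)^n * U q n := by
    rw [← htail]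
    linarith
  calc (q n : ℝ) * al q - (q n : ℝ) * ∑ m ∈ range n, (-1:ℝ)^m * cc q m
      = (q n : ℝ) * (al q - ∑ m ∈ range n, (-1:ℝ)^m * cc q m) := by ring
    _ = (q n : ℝ) * ((-1)^n * U q n) := by rw [this]

theorem abs_eta (n : ℕ) : |eta a q n| = (q n : ℝ) * U q n := by
  rw [eta_eq H n, abs_mul, abs_mul, abs_pow, abs_neg, abs_one, one_pow, one_mul,
    Nat.abs_cast, abs_of_nonneg (U_nonneg H n)]

theorem eta_ub (n : ℕ) : |eta a q n| ≤ ((q (n+1) : ℝ))⁻¹ := by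
  rw [abs_eta H n]
  have h1 : (q n : ℝ) * U q n ≤ (q n : ℝ) * cc q n :=
    mul_le_mul_of_nonneg_left (U_ub H n) (qposR H n).le
  have h2 : (q n : ℝ) * cc q n = ((q (n+1) : ℝ))⁻¹ := by
    unfold cc
    rw [mul_inv, ← mul_assoc, mul_inv_cancel₀ (qposR H n).ne', one_mul]
  linarith

theorem eta_lb (n : ℕ) : ((q (n+2) : ℝ))⁻¹ ≤ |eta a q n| := by
  rw [abs_eta H n]
  have h1 : (q n : ℝ) * (cc q n - cc q (n+1)) ≤ (q n : ℝ) * U q n :=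
    mul_le_mul_of_nonneg_left (U_lb H n) (qposR H n).le
  have h2 : ((q (n+2) : ℝ))⁻¹ ≤ (q n : ℝ) * (cc q n - cc q (n+1)) := by
    unfold cc
    have e0 := qposR H n
    have e1 := qposR H (n+1)
    have e2 := qposR H (n+2)
    have hadd : (q (n+1) : ℝ) + q n ≤ q (n+2) := by exact_mod_cast qadd H n
    rw [mul_sub]
    have ha : (q n : ℝ) * ((q n : ℝ) * q (n+1))⁻¹ = (q (n+1):ℝ)⁻¹ := by field_simp
    have hb : (q n : ℝ) * ((q (n+1) : ℝ) * q (n+2))⁻¹ = (q n : ℝ)/((q (n+1):ℝ) * q (n+2)) := by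
      field_simp
    rw [ha, hb]
    have key : ((q (n+2):ℝ))⁻¹ ≤ ((q (n+1):ℝ))⁻¹ - (q n : ℝ)/((q (n+1):ℝ)*(q (n+2):ℝ)) := by
      calc ((q (n+2):ℝ))⁻¹ = (q (n+1):ℝ) / ((q (n+1):ℝ)*(q (n+2):ℝ)) := by
            field_simp
        _ ≤ ((q (n+2):ℝ) - q n) / ((q (n+1):ℝ)*(q (n+2):ℝ)) := by
            gcongr
            linarith
        _ = ((q (n+1):ℝ))⁻¹ - (q n : ℝ)/((q (n+1):ℝ)*(q (n+2):ℝ)) := by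
            field_simp
    exact key
  linarith

omit H in
theorem eta_congr (n m : ℕ) :
    (q n : ℝ) * eta a q m
      = (q m : ℝ) * eta a q n + (((q m : ℤ) * p a n - (q n : ℤ) * p a m : ℤ) : ℝ) := by
  unfold eta
  push_cast
  ring

theorem exists_N (hsup : ∀ M : ℕ, ∃ n, M * q n ≤ q (n + 1)) :
    ∃ N : ℕ → ℕ, (∀ k, 8^(k+1) * q (N k) ≤ q (N k + 1)) ∧ (∀ k, N k + 2 ≤ N (k+1)) := by
  have step : ∀ k B, ∃ n, B ≤ n ∧ 8^(k+1) * q n ≤ q (n+1) := by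
    intro k B
    obtain ⟨n, hn⟩ := hsup (8^(k+1) + (range (B+1)).sup q)
    refine ⟨n, ?_, ?_⟩
    · by_contra hcon
      push_neg at hcon
      have h1 : q (n+1) ≤ (range (B+1)).sup q :=
        Finset.le_sup (Finset.mem_range.mpr (by omega))
      have h2 : 8^(k+1) + (range (B+1)).sup q
          ≤ (8^(k+1) + (range (B+1)).sup q) * q n :=
        Nat.le_mul_of_pos_right _ (qpos H n)
      have h3 : 0 < 8^(k+1) := Nat.pow_pos (by norm_num)
      omega
    · calc 8^(k+1) * q n ≤ (8^(k+1) + (range (B+1)).sup q) * q n :=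
          Nat.mul_le_mul_right _ (by omega)
        _ ≤ q (n+1) := hn
  choose! f hf1 hf2 using step
  refine ⟨fun k => Nat.rec (f 0 0) (fun k ih => f (k+1) (ih + 2)) k, fun k => ?_, fun k => ?_⟩
  · cases k with
    | zero => exact hf2 0 0
    | succ k => exact hf2 (k+1) _
  · exact hf1 (k+1) _

section NFacts

variable {N : ℕ → ℕ} (hN1 : ∀ k, 8^(k+1) * q (N k) ≤ q (N k + 1))
  (hN2 : ∀ k, N k + 2 ≤ N (k+1))

include hN1 hN2

omit H hN1 in
theorem Nmono : StrictMono N :=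
  strictMono_nat_of_lt_succ (fun k => by have := hN2 k; omega)

omit H hN1 in
theorem Nge (k : ℕ) : k ≤ N k := (Nmono hN2).le_apply

theorem hQ8 (k : ℕ) : 8 * q (N k + 1) ≤ q (N (k+1) + 1) := by
  have h1 := hN1 (k+1)
  have h2 : q (N k + 1) ≤ q (N (k+1)) := qmono H (by have := hN2 k; omega)
  have h3 : 8 ≤ 8^(k+2) := by
    calc (8:ℕ) = 8^1 := by norm_num
      _ ≤ 8^(k+2) := Nat.pow_le_pow_right (by norm_num) (by omega)
  calc 8 * q (N k + 1) ≤ 8 * q (N (k+1)) := by omega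
    _ ≤ 8^(k+2) * q (N (k+1)) := Nat.mul_le_mul_right _ h3
    _ ≤ q (N (k+1) + 1) := h1

theorem hQpow (k j : ℕ) : 8^j * q (N k + 1) ≤ q (N (k+j) + 1) := by
  induction j with
  | zero => simp
  | succ j ih =>
    have h1 := hQ8 H hN1 hN2 (k+j)
    calc 8^(j+1) * q (N k + 1) = 8 * (8^j * q (N k + 1)) := by ring
      _ ≤ 8 * q (N (k+j) + 1) := by omega
      _ ≤ q (N (k+j+1) + 1) := by
          rw [show k+j+1 = (k+j)+1 from rfl] at *
          exact h1
    -- note k+(j+1) = (k+j)+1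
  
theorem hQlb (k : ℕ) : 8^(k+1) ≤ q (N k + 1) := by
  have h1 := hN1 k
  have h2 := qpos H (N k)
  calc 8^(k+1) = 8^(k+1) * 1 := by ring
    _ ≤ 8^(k+1) * q (N k) := Nat.mul_le_mul_left _ h2
    _ ≤ q (N k + 1) := h1

theorem inv_Q_le (k j : ℕ) :
    ((q (N (k+j) + 1) : ℝ))⁻¹ ≤ ((8:ℝ)⁻¹)^j * ((q (N k + 1) : ℝ))⁻¹ := by
  have h1 : ((8:ℝ))^j * (q (N k + 1) : ℝ) ≤ q (N (k+j) + 1) := by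
    exact_mod_cast hQpow H hN1 hN2 k j
  have h2 : (0:ℝ) < 8^j * (q (N k + 1) : ℝ) := by
    have := qposR H (N k + 1); positivity
  calc ((q (N (k+j) + 1) : ℝ))⁻¹ ≤ ((8:ℝ)^j * (q (N k + 1) : ℝ))⁻¹ :=
        inv_anti₀ h2 h1
    _ = ((8:ℝ)⁻¹)^j * ((q (N k + 1) : ℝ))⁻¹ := by
        rw [mul_inv, inv_pow]

theorem tail_summable (u : ℕ → ℝ) (hu : ∀ j, |u j| ≤ 1) (k : ℕ) :
    Summable (fun j => u j * eta a q (N (j+k))) := by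
  apply Summable.of_abs
  have hgeo : Summable (fun j : ℕ => ((8:ℝ)⁻¹)^j * ((q (N k + 1) : ℝ))⁻¹) :=
    (summable_geometric_of_lt_one (by norm_num) (by norm_num)).mul_right _
  apply Summable.of_nonneg_of_le (fun j => abs_nonneg _) ?_ hgeo
  intro j
  have h1 : |u j * eta a q (N (j+k))| ≤ |eta a q (N (j+k))| := by
    rw [abs_mul]
    have := abs_nonneg (eta a q (N (j+k)))
    nlinarith [hu j]
  have h2 : |eta a q (N (j+k))| ≤ ((q (N (j+k) + 1) : ℝ))⁻¹ := eta_ub H (N (j+k))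
  have h3 := inv_Q_le H hN1 hN2 k j
  rw [show k+j = j+k from by omega] at h3
  linarith

theorem tail_bound (u : ℕ → ℝ) (hu : ∀ j, |u j| ≤ 1) (k : ℕ) :
    |∑' j, u j * eta a q (N (j+k))| ≤ 2 * ((q (N k + 1) : ℝ))⁻¹ := by
  have habs : Summable (fun j => |u j * eta a q (N (j+k))|) :=
    (tail_summable H hN1 hN2 u hu k).abs
  have h0 : |∑' j, u j * eta a q (N (j+k))| ≤ ∑' j, |u j * eta a q (N (j+k))| := by
    simpa only [Real.norm_eq_abs] using norm_tsum_le_tsum_norm (f := fun j => u j * eta a q (N (j+k))) habs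
  have hgeo : Summable (fun j : ℕ => ((8:ℝ)⁻¹)^j * ((q (N k + 1) : ℝ))⁻¹) :=
    (summable_geometric_of_lt_one (by norm_num) (by norm_num)).mul_right _
  have h1 : ∑' j, |u j * eta a q (N (j+k))| ≤ ∑' j : ℕ, ((8:ℝ)⁻¹)^j * ((q (N k + 1) : ℝ))⁻¹ := by
    apply Summable.tsum_le_tsum _ habs hgeo
    intro j
    have ha : |u j * eta a q (N (j+k))| ≤ |eta a q (N (j+k))| := by
      rw [abs_mul]
      have := abs_nonneg (eta a q (N (j+k)))
      nlinarith [hu j]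
    have hb := eta_ub H (N (j+k))
    have h3 := inv_Q_le H hN1 hN2 k j
    rw [show k+j = j+k from by omega] at h3
    linarith
  have h2 : ∑' j : ℕ, ((8:ℝ)⁻¹)^j * ((q (N k + 1) : ℝ))⁻¹
      = (1 - (8:ℝ)⁻¹)⁻¹ * ((q (N k + 1) : ℝ))⁻¹ := by
    rw [tsum_mul_right, tsum_geometric_of_lt_one (by norm_num) (by norm_num)]
  have h4 : (0:ℝ) ≤ ((q (N k + 1) : ℝ))⁻¹ := by
    have := qposR H (N k + 1); positivity
  have h5 : (1 - (8:ℝ)⁻¹)⁻¹ ≤ 2 := by norm_num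
  calc |∑' j, u j * eta a q (N (j+k))| ≤ ∑' j, |u j * eta a q (N (j+k))| := h0
    _ ≤ (1 - (8:ℝ)⁻¹)⁻¹ * ((q (N k + 1) : ℝ))⁻¹ := by rw [← h2]; exact h1
    _ ≤ 2 * ((q (N k + 1) : ℝ))⁻¹ := by nlinarith

end NFacts

/-- the point `x_ε = Σ_k ε_k η_{N_k}`. -/
noncomputable def xe (a q N : ℕ → ℕ) (ε : ℕ → Bool) : ℝ :=
  ∑' j, (if ε j then (1:ℝ) else 0) * eta a q (N j)

omit H in
theorem ee_abs (ε : ℕ → Bool) (j : ℕ) : |(if ε j then (1:ℝ) else 0)| ≤ 1 := by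
  split <;> norm_num

section NFacts2

variable {N : ℕ → ℕ} (hN1 : ∀ k, 8^(k+1) * q (N k) ≤ q (N k + 1))
  (hN2 : ∀ k, N k + 2 ≤ N (k+1))

include hN1 hN2

theorem xe_summable (ε : ℕ → Bool) :
    Summable (fun j => (if ε j then (1:ℝ) else 0) * eta a q (N j)) :=
  (tail_summable H hN1 hN2 (fun j => if ε j then (1:ℝ) else 0) (ee_abs ε) 0).congr
    (fun j => by norm_num)

omit hN1 hN2 in
omit H in
theorem norm_smul_coe (n : ℕ) (x : ℝ) :
    ‖(n • ((x : ℝ) : AddCircle (1:ℝ)))‖ = ‖(((n * x : ℝ)) : AddCircle (1:ℝ))‖ := by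
  rw [← AddCircle.coe_nsmul]
  norm_num

omit hN1 hN2 in
omit H in
theorem norm_coe_le (x : ℝ) (m : ℤ) : ‖((x : ℝ) : AddCircle (1:ℝ))‖ ≤ |x - m| := by
  rw [AddCircle.norm_eq]; simpa using round_le x m

theorem norm_bound (ε : ℕ → Bool) (n J : ℕ) :
    ‖((q n : ℕ) • ((xe a q N ε : ℝ) : AddCircle (1:ℝ)))‖ ≤
      (∑ j ∈ range J, (q (N j):ℝ)) * |eta a q n|
        + 2 * (q n : ℝ) * ((q (N J + 1):ℝ))⁻¹ := by
  set e : ℕ → ℝ := fun j => if ε j then (1:ℝ) else 0 with he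
  have hsm : Summable (fun j => e j * eta a q (N j)) := xe_summable H hN1 hN2 ε
  have hsm2 : Summable (fun j => (q n : ℝ) * (e j * eta a q (N j))) := hsm.mul_left _
  have hsplit : ∑ j ∈ range J, (q n : ℝ) * (e j * eta a q (N j))
      + ∑' j, (q n : ℝ) * (e (j+J) * eta a q (N (j+J)))
      = (q n : ℝ) * xe a q N ε := by
    have h1 := Summable.sum_add_tsum_nat_add (f := fun j => (q n : ℝ) * (e j * eta a q (N j))) J hsm2
    rw [h1]
    unfold xe
    rw [← tsum_mul_left]
  set M : ℤ := ∑ j ∈ range J,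
    (if ε j then (q (N j) : ℤ) * p a n - (q n : ℤ) * p a (N j) else 0) with hM
  have hhead : ∑ j ∈ range J, (q n : ℝ) * (e j * eta a q (N j))
      = (∑ j ∈ range J, e j * (q (N j):ℝ)) * eta a q n + (M : ℝ) := by
    rw [hM]
    push_cast
    rw [Finset.sum_mul, ← Finset.sum_add_distrib]
    apply Finset.sum_congr rfl
    intro j _
    by_cases h : ε j
    · simp only [he, h, if_true, one_mul]
      have := eta_congr (a := a) (q := q) n (N j)
      push_cast at this
      linarith
    · simp [he, h]
  have htail : |∑' j, (q n : ℝ) * (e (j+J) * eta a q (N (j+J)))|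
      ≤ 2 * (q n : ℝ) * ((q (N J + 1):ℝ))⁻¹ := by
    rw [tsum_mul_left, abs_mul, Nat.abs_cast]
    have hb := tail_bound H hN1 hN2 (fun j => e (j+J)) (fun j => ee_abs ε (j+J)) J
    have hq := qposR H n
    calc (q n : ℝ) * |∑' j, e (j+J) * eta a q (N (j+J))|
        ≤ (q n : ℝ) * (2 * ((q (N J + 1):ℝ))⁻¹) :=
          mul_le_mul_of_nonneg_left hb hq.le
      _ = 2 * (q n : ℝ) * ((q (N J + 1):ℝ))⁻¹ := by ring
  have hxsplit : (q n : ℝ) * xe a q N ε - M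
      = (∑ j ∈ range J, e j * (q (N j):ℝ)) * eta a q n
        + ∑' j, (q n : ℝ) * (e (j+J) * eta a q (N (j+J))) := by
    rw [← hsplit, hhead]; ring
  have hcoef : |∑ j ∈ range J, e j * (q (N j):ℝ)| ≤ ∑ j ∈ range J, (q (N j):ℝ) := by
    calc |∑ j ∈ range J, e j * (q (N j):ℝ)| ≤ ∑ j ∈ range J, |e j * (q (N j):ℝ)| :=
          Finset.abs_sum_le_sum_abs _ _
      _ ≤ ∑ j ∈ range J, (q (N j):ℝ) := by
          apply Finset.sum_le_sum
          intro j _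
          rw [abs_mul, Nat.abs_cast]
          have := ee_abs ε j
          have := (qposR H (N j)).le
          nlinarith [abs_nonneg (e j)]
  calc ‖((q n : ℕ) • ((xe a q N ε : ℝ) : AddCircle (1:ℝ)))‖
      = ‖((((q n : ℝ) * xe a q N ε : ℝ)) : AddCircle (1:ℝ))‖ := norm_smul_coe _ _
    _ ≤ |(q n : ℝ) * xe a q N ε - M| := norm_coe_le _ _
    _ = |(∑ j ∈ range J, e j * (q (N j):ℝ)) * eta a q n
          + ∑' j, (q n : ℝ) * (e (j+J) * eta a q (N (j+J)))| := by rw [hxsplit]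
    _ ≤ |(∑ j ∈ range J, e j * (q (N j):ℝ)) * eta a q n|
          + |∑' j, (q n : ℝ) * (e (j+J) * eta a q (N (j+J)))| := abs_add_le _ _
    _ ≤ (∑ j ∈ range J, (q (N j):ℝ)) * |eta a q n|
          + 2 * (q n : ℝ) * ((q (N J + 1):ℝ))⁻¹ := by
        apply add_le_add _ htail
        rw [abs_mul]
        exact mul_le_mul_of_nonneg_right hcoef (abs_nonneg _)

end NFacts2

section NFacts3

variable {N : ℕ → ℕ} (hN1 : ∀ k, 8^(k+1) * q (N k) ≤ q (N k + 1))
  (hN2 : ∀ k, N k + 2 ≤ N (k+1))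

include hN1 hN2

theorem ratio_le (j : ℕ) : (q (N j) : ℝ) * ((q (N j + 1):ℝ))⁻¹ ≤ ((8:ℝ)^(j+1))⁻¹ := by
  have h1 : ((8:ℝ))^(j+1) * (q (N j) : ℝ) ≤ q (N j + 1) := by exact_mod_cast hN1 j
  have h2 := qposR H (N j)
  have h3 := qposR H (N j + 1)
  have key : (q (N j):ℝ) / (q (N j + 1)) ≤ 1 / (8:ℝ)^(j+1) := by
    rw [div_le_div_iff₀ h3 (by positivity)]
    nlinarith
  calc (q (N j):ℝ) * ((q (N j+1):ℝ))⁻¹ = (q (N j):ℝ)/(q (N j+1)) := by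
        rw [div_eq_mul_inv]
    _ ≤ 1/(8:ℝ)^(j+1) := key
    _ = ((8:ℝ)^(j+1))⁻¹ := one_div _

theorem mem_G1_aux (ε : ℕ → Bool) :
    Summable (fun n => ‖((q n : ℕ) • ((xe a q N ε : ℝ) : AddCircle (1:ℝ)))‖) := by
  classical
  have hJex : ∀ n : ℕ, ∃ j, n ≤ N j := fun n => ⟨n, Nge hN2 n⟩
  set Jn : ℕ → ℕ := fun n => Nat.find (hJex n) with hJn
  have hJ1 : ∀ n, n ≤ N (Jn n) := fun n => Nat.find_spec (hJex n)
  have hJ2 : ∀ n j, j < Jn n → N j < n := by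
    intro n j hj
    have := Nat.find_min (hJex n) hj
    omega
  have hJ3 : ∀ n, Jn n ≤ n := fun n => Nat.find_min' (hJex n) (Nge hN2 n)
  apply summable_of_sum_range_le (c := 3) (fun n => norm_nonneg _)
  intro R
  have key : ∀ n ∈ range R, ‖((q n : ℕ) • ((xe a q N ε : ℝ) : AddCircle (1:ℝ)))‖ ≤
      (∑ j ∈ range R, if N j < n then (q (N j):ℝ) * |eta a q n| else 0)
        + ∑ j ∈ range R, (if Jn n = j then 2 * (q n : ℝ) * ((q (N j + 1):ℝ))⁻¹ else 0) := by
    intro n hn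
    have hnR := mem_range.mp hn
    have h1 := norm_bound H hN1 hN2 ε n (Jn n)
    have hhead : (∑ j ∈ range (Jn n), (q (N j):ℝ)) * |eta a q n|
        ≤ ∑ j ∈ range R, if N j < n then (q (N j):ℝ) * |eta a q n| else 0 := by
      rw [Finset.sum_mul]
      have e1 : ∀ j ∈ range (Jn n), (q (N j):ℝ) * |eta a q n|
          = if N j < n then (q (N j):ℝ) * |eta a q n| else 0 := by
        intro j hj
        rw [if_pos (hJ2 n j (mem_range.mp hj))]
      rw [Finset.sum_congr rfl e1]
      apply Finset.sum_le_sum_of_subset_of_nonneg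
      · apply range_subset_range.mpr
        have := hJ3 n
        omega
      · intro j _ _
        split
        · positivity
        · exact le_refl 0
    have htl : 2 * (q n : ℝ) * ((q (N (Jn n) + 1):ℝ))⁻¹
        = ∑ j ∈ range R, (if Jn n = j then 2 * (q n : ℝ) * ((q (N j + 1):ℝ))⁻¹ else 0) := by
      rw [Finset.sum_ite_eq (range R) (Jn n)
        (fun j => 2 * (q n : ℝ) * ((q (N j + 1):ℝ))⁻¹)]
      rw [if_pos (mem_range.mpr (by have := hJ3 n; omega))]
    linarith
  have step1 : ∑ n ∈ range R, ‖((q n : ℕ) • ((xe a q N ε : ℝ) : AddCircle (1:ℝ)))‖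
      ≤ (∑ n ∈ range R, ∑ j ∈ range R, if N j < n then (q (N j):ℝ) * |eta a q n| else 0)
        + ∑ n ∈ range R, ∑ j ∈ range R,
            (if Jn n = j then 2 * (q n : ℝ) * ((q (N j + 1):ℝ))⁻¹ else 0) := by
    rw [← Finset.sum_add_distrib]
    exact Finset.sum_le_sum key
  have hgeosum : ∀ C : ℝ, 0 ≤ C → ∑ j ∈ range R, C * ((8:ℝ)⁻¹)^j ≤ C * (8/7) := by
    intro C hC
    have h1 : ∑ j ∈ range R, C * ((8:ℝ)⁻¹)^j = C * ∑ j ∈ range R, ((8:ℝ)⁻¹)^j := by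
      rw [Finset.mul_sum]
    rw [h1]
    have h2 : ∑ j ∈ range R, ((8:ℝ)⁻¹)^j ≤ ∑' j : ℕ, ((8:ℝ)⁻¹)^j :=
      Summable.sum_le_tsum _ (fun i _ => by positivity)
        (summable_geometric_of_lt_one (by norm_num) (by norm_num))
    have h3 : ∑' j : ℕ, ((8:ℝ)⁻¹)^j = (1 - (8:ℝ)⁻¹)⁻¹ :=
      tsum_geometric_of_lt_one (by norm_num) (by norm_num)
    have h4 : (1 - (8:ℝ)⁻¹)⁻¹ = 8/7 := by norm_num
    nlinarith
  have hdouble1 : ∑ n ∈ range R, ∑ j ∈ range R,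
      (if N j < n then (q (N j):ℝ) * |eta a q n| else 0) ≤ 1 := by
    rw [Finset.sum_comm]
    have inner : ∀ j ∈ range R, ∑ n ∈ range R,
        (if N j < n then (q (N j):ℝ) * |eta a q n| else 0) ≤ (1/2) * ((8:ℝ)⁻¹)^j := by
      intro j _
      rw [← Finset.sum_filter]
      have s1 : ∑ n ∈ (range R).filter (fun n => N j < n), (q (N j):ℝ) * |eta a q n|
          ≤ ∑ n ∈ (range R).filter (fun n => N j < n), (q (N j):ℝ) * ((q (n+1):ℝ))⁻¹ :=
        Finset.sum_le_sum (fun n _ =>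
          mul_le_mul_of_nonneg_left (eta_ub H n) (qposR H (N j)).le)
      have s2 : (range R).filter (fun n => N j < n)
          ⊆ Finset.image (fun i => N j + 1 + i) (range R) := by
        intro n hn
        rw [Finset.mem_filter, mem_range] at hn
        rw [Finset.mem_image]
        exact ⟨n - N j - 1, mem_range.mpr (by omega), by omega⟩
      have s3 : ∑ n ∈ (range R).filter (fun n => N j < n), (q (N j):ℝ) * ((q (n+1):ℝ))⁻¹
          ≤ ∑ n ∈ Finset.image (fun i => N j + 1 + i) (range R),
              (q (N j):ℝ) * ((q (n+1):ℝ))⁻¹ := by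
        apply Finset.sum_le_sum_of_subset_of_nonneg s2
        intro i _ _
        have := qposR H (i+1)
        have := qposR H (N j)
        positivity
      have s4 : ∑ n ∈ Finset.image (fun i => N j + 1 + i) (range R),
          (q (N j):ℝ) * ((q (n+1):ℝ))⁻¹
          = ∑ i ∈ range R, (q (N j):ℝ) * ((q ((N j + 2) + i):ℝ))⁻¹ := by
        rw [Finset.sum_image (fun x _ y _ h => by omega)]
        apply Finset.sum_congr rfl
        intro i _
        rw [show N j + 1 + i + 1 = N j + 2 + i from by omega]
      have s5 : ∑ i ∈ range R, (q (N j):ℝ) * ((q ((N j + 2) + i):ℝ))⁻¹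
          ≤ (q (N j):ℝ) * (4 * ((q (N j + 1):ℝ))⁻¹) := by
        rw [← Finset.mul_sum]
        apply mul_le_mul_of_nonneg_left _ (qposR H (N j)).le
        have t1 := sum_inv_le H R (N j + 2)
        have t2 : (2:ℝ)/q (N j + 2) + 2/q (N j + 2 + 1) ≤ 4 * ((q (N j + 1):ℝ))⁻¹ := by
          have u1 : (q (N j + 1):ℝ) ≤ q (N j + 2) := by
            exact_mod_cast qmono H (by omega)
          have u2 : (q (N j + 1):ℝ) ≤ q (N j + 2 + 1) := by
            exact_mod_cast qmono H (by omega)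
          have v1 := qposR H (N j + 1)
          have v2 := qposR H (N j + 2)
          have v3 := qposR H (N j + 2 + 1)
          have w1 : (2:ℝ)/q (N j + 2) ≤ 2/q (N j + 1) := by
            apply div_le_div_of_nonneg_left (by norm_num) v1 u1
          have w2 : (2:ℝ)/q (N j + 2 + 1) ≤ 2/q (N j + 1) := by
            apply div_le_div_of_nonneg_left (by norm_num) v1 u2
          have : (4:ℝ) * ((q (N j + 1):ℝ))⁻¹ = 2/q (N j + 1) + 2/q (N j + 1) := by
            field_simp
            norm_num
          linarith
        linarith
      have s6 : (q (N j):ℝ) * (4 * ((q (N j + 1):ℝ))⁻¹) ≤ (1/2) * ((8:ℝ)⁻¹)^j := by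
      -- q(Nj)/q(Nj+1) ≤ 8^{-(j+1)}
        have r := ratio_le H hN1 hN2 j
        have : ((8:ℝ)^(j+1))⁻¹ = (8:ℝ)⁻¹ * ((8:ℝ)⁻¹)^j := by
          rw [← inv_pow, pow_succ]
          ring
        have hge : (0:ℝ) ≤ ((8:ℝ)⁻¹)^j := by positivity
        nlinarith
      linarith
    calc ∑ j ∈ range R, ∑ n ∈ range R,
        (if N j < n then (q (N j):ℝ) * |eta a q n| else 0)
        ≤ ∑ j ∈ range R, (1/2) * ((8:ℝ)⁻¹)^j := Finset.sum_le_sum inner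
      _ ≤ (1/2) * (8/7) := hgeosum (1/2) (by norm_num)
      _ ≤ 1 := by norm_num
  have hdouble2 : ∑ n ∈ range R, ∑ j ∈ range R,
      (if Jn n = j then 2 * (q n : ℝ) * ((q (N j + 1):ℝ))⁻¹ else 0) ≤ 2 := by
    rw [Finset.sum_comm]
    have inner : ∀ j ∈ range R, ∑ n ∈ range R,
        (if Jn n = j then 2 * (q n : ℝ) * ((q (N j + 1):ℝ))⁻¹ else 0)
          ≤ ((8:ℝ)⁻¹)^j := by
      intro j _
      rw [← Finset.sum_filter]
      have s2 : (range R).filter (fun n => Jn n = j) ⊆ range (N j + 1) := by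
        intro n hn
        rw [Finset.mem_filter] at hn
        have := hJ1 n
        rw [hn.2] at this
        exact mem_range.mpr (by omega)
      have s3 : ∑ n ∈ (range R).filter (fun n => Jn n = j),
          2 * (q n : ℝ) * ((q (N j + 1):ℝ))⁻¹
          ≤ ∑ n ∈ range (N j + 1), 2 * (q n : ℝ) * ((q (N j + 1):ℝ))⁻¹ := by
        apply Finset.sum_le_sum_of_subset_of_nonneg s2
        intro i _ _
        have := qposR H i
        have := qposR H (N j + 1)
        positivity
      have s4 : ∑ n ∈ range (N j + 1), 2 * (q n : ℝ) * ((q (N j + 1):ℝ))⁻¹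
          ≤ 2 * (4 * (q (N j):ℝ)) * ((q (N j + 1):ℝ))⁻¹ := by
        have e1 : ∑ n ∈ range (N j + 1), 2 * (q n : ℝ) * ((q (N j + 1):ℝ))⁻¹
            = 2 * (∑ n ∈ range (N j + 1), (q n:ℝ)) * ((q (N j + 1):ℝ))⁻¹ := by
          rw [Finset.mul_sum, Finset.sum_mul]
        rw [e1]
        have e2 : (∑ n ∈ range (N j + 1), (q n:ℝ)) ≤ 4 * (q (N j):ℝ) := by
          have := sumq H (N j)
          exact_mod_cast (by push_cast; exact_mod_cast this : (∑ n ∈ range (N j + 1), (q n:ℝ)) ≤ ((4 * q (N j) : ℕ) : ℝ))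
        have e3 : (0:ℝ) ≤ ((q (N j + 1):ℝ))⁻¹ := by
          have := qposR H (N j + 1); positivity
        nlinarith
      have s5 : 2 * (4 * (q (N j):ℝ)) * ((q (N j + 1):ℝ))⁻¹ ≤ ((8:ℝ)⁻¹)^j := by
        have r := ratio_le H hN1 hN2 j
        have e : ((8:ℝ)^(j+1))⁻¹ = (8:ℝ)⁻¹ * ((8:ℝ)⁻¹)^j := by
          rw [← inv_pow, pow_succ]
          ring
        have hge : (0:ℝ) ≤ ((8:ℝ)⁻¹)^j := by positivity
        nlinarith
      linarith
    calc ∑ j ∈ range R, ∑ n ∈ range R,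
        (if Jn n = j then 2 * (q n : ℝ) * ((q (N j + 1):ℝ))⁻¹ else 0)
        ≤ ∑ j ∈ range R, ((8:ℝ)⁻¹)^j := Finset.sum_le_sum inner
      _ = ∑ j ∈ range R, 1 * ((8:ℝ)⁻¹)^j := by simp
      _ ≤ 1 * (8/7) := hgeosum 1 (by norm_num)
      _ ≤ 2 := by norm_num
  linarith

end NFacts3

section NFacts4

variable {N : ℕ → ℕ} (hN1 : ∀ k, 8^(k+1) * q (N k) ≤ q (N k + 1))
  (hN2 : ∀ k, N k + 2 ≤ N (k+1))

include hN1 hN2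

theorem xe_inj :
    Function.Injective (fun ε : ℕ → Bool => ((xe a q N ε : ℝ) : AddCircle (1:ℝ))) := by
  intro ε ε' hco
  dsimp only [] at hco
  by_contra hne
  have hex : ∃ k, ε k ≠ ε' k := by
    by_contra hcon
    push_neg at hcon
    exact hne (funext hcon)
  classical
  set k := Nat.find hex with hk
  set δ : ℕ → ℝ := fun j =>
    (if ε j then (1:ℝ) else 0) - (if ε' j then (1:ℝ) else 0) with hδ
  have hδabs : ∀ j, |δ j| ≤ 1 := by
    intro j
    simp only [hδ]
    split <;> split <;> norm_num
  have hδ0 : ∀ j, j < k → δ j = 0 := by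
    intro j hj
    have h1 := Nat.find_min hex hj
    push_neg at h1
    simp only [hδ, h1]
    ring
  have hδk : |δ k| = 1 := by
    have h1 : ε k ≠ ε' k := Nat.find_spec hex
    simp only [hδ]
    rcases Bool.eq_false_or_eq_true (ε k) with h2 | h2 <;>
      rcases Bool.eq_false_or_eq_true (ε' k) with h3 | h3 <;>
      simp [h2, h3] at h1 ⊢
  have hsm : Summable (fun j => δ j * eta a q (N j)) :=
    ((xe_summable H hN1 hN2 ε).sub (xe_summable H hN1 hN2 ε')).congr
      (fun j => by simp only [hδ]; ring)
  have hdiff : xe a q N ε - xe a q N ε' = ∑' j, δ j * eta a q (N j) := by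
    unfold xe
    rw [← Summable.tsum_sub (xe_summable H hN1 hN2 ε) (xe_summable H hN1 hN2 ε')]
    apply tsum_congr
    intro j
    simp only [hδ]
    ring
  have h2 : ((xe a q N ε - xe a q N ε' : ℝ) : AddCircle (1:ℝ)) = 0 := by
    rw [AddCircle.coe_sub, hco, sub_self]
  obtain ⟨m, hmeq0⟩ := (AddCircle.coe_eq_zero_iff (1:ℝ)).1 h2
  have hmeq : xe a q N ε - xe a q N ε' = (m : ℝ) := by
    rw [← hmeq0]
    simp
  have hsm2 : Summable (fun j => δ (j+k) * eta a q (N (j+k))) :=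
    tail_summable H hN1 hN2 (fun j => δ (j+k)) (fun j => hδabs _) k
  have hsplit : ∑' j, δ j * eta a q (N j)
      = δ k * eta a q (N k) + ∑' j, δ (j+(k+1)) * eta a q (N (j+(k+1))) := by
    have h1 := Summable.sum_add_tsum_nat_add (f := fun j => δ j * eta a q (N j)) k hsm
    have hz : ∑ j ∈ range k, δ j * eta a q (N j) = 0 :=
      Finset.sum_eq_zero (fun j hj => by rw [hδ0 j (mem_range.mp hj)]; ring)
    have h3 := Summable.tsum_eq_zero_add hsm2
    have h4 : ∑' j, δ ((j+1)+k) * eta a q (N ((j+1)+k))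
        = ∑' j, δ (j+(k+1)) * eta a q (N (j+(k+1))) :=
      tsum_congr (fun j => by rw [show (j+1)+k = j+(k+1) from by omega])
    rw [← h1, hz, zero_add, h3, h4]
    norm_num
  have htail := tail_bound H hN1 hN2 (fun j => δ (j+(k+1))) (fun j => hδabs _) (k+1)
  have hQk : (8:ℝ) ≤ q (N k + 1) := by
    have h1 := hQlb H hN1 hN2 k
    have h3 : (8:ℕ) ≤ 8^(k+1) := by
      calc (8:ℕ) = 8^1 := by norm_num
        _ ≤ 8^(k+1) := Nat.pow_le_pow_right (by norm_num) (by omega)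
    exact_mod_cast le_trans h3 h1
  have hQk1 : (8:ℝ) * q (N k + 2) ≤ q (N (k+1) + 1) := by
    have h1 := hN1 (k+1)
    have h2 : q (N k + 2) ≤ q (N (k+1)) := qmono H (hN2 k)
    have h3 : (8:ℕ) ≤ 8^(k+2) := by
      calc (8:ℕ) = 8^1 := by norm_num
        _ ≤ 8^(k+2) := Nat.pow_le_pow_right (by norm_num) (by omega)
    have : 8 * q (N k + 2) ≤ q (N (k+1) + 1) := by
      calc 8 * q (N k + 2) ≤ 8^(k+2) * q (N (k+1)) :=
            Nat.mul_le_mul h3 h2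
        _ ≤ q (N (k+1) + 1) := h1
    exact_mod_cast this
  have hQk1' : (8:ℝ) ≤ q (N (k+1) + 1) := by
    have := qposR H (N k + 2)
    have h1 : (1:ℝ) ≤ q (N k + 2) := by exact_mod_cast qpos H (N k + 2)
    nlinarith
  have habs_k : |δ k * eta a q (N k)| = |eta a q (N k)| := by
    rw [abs_mul, hδk, one_mul]
  have hub := eta_ub H (N k)
  have hlb := eta_lb H (N k)
  have hpos1 := qposR H (N k + 1)
  have hpos2 := qposR H (N k + 2)
  have hpos3 := qposR H (N (k+1) + 1)
  have htail' : |∑' j, δ (j+(k+1)) * eta a q (N (j+(k+1)))|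
      ≤ 2 * ((q (N (k+1) + 1) : ℝ))⁻¹ := htail
  have hinvk : ((q (N k + 1) : ℝ))⁻¹ ≤ 1/8 := by
    rw [inv_le_comm₀ hpos1 (by norm_num)]
    linarith [hQk]
  have hinvk1 : ((q (N (k+1) + 1) : ℝ))⁻¹ ≤ 1/8 := by
    rw [inv_le_comm₀ hpos3 (by norm_num)]
    linarith [hQk1']
  -- m = 0
  have hm0 : m = 0 := by
    have h1 : |(m:ℝ)| < 1 := by
      rw [← hmeq, hdiff, hsplit]
      calc |δ k * eta a q (N k) + ∑' j, δ (j+(k+1)) * eta a q (N (j+(k+1)))|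
          ≤ |δ k * eta a q (N k)| + |∑' j, δ (j+(k+1)) * eta a q (N (j+(k+1)))| :=
            abs_add_le _ _
        _ ≤ ((q (N k + 1) : ℝ))⁻¹ + 2 * ((q (N (k+1) + 1) : ℝ))⁻¹ := by
            rw [habs_k]
            exact add_le_add hub htail'
        _ < 1 := by nlinarith
    have h2 : |m| < 1 := by exact_mod_cast h1
    have h3 := abs_lt.1 h2
    omega
  have hzero : δ k * eta a q (N k) + ∑' j, δ (j+(k+1)) * eta a q (N (j+(k+1))) = 0 := by
    rw [← hsplit, ← hdiff, hmeq, hm0]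
    norm_num
  have hcontra : |δ k * eta a q (N k)| ≤ 2 * ((q (N (k+1) + 1) : ℝ))⁻¹ := by
    have : δ k * eta a q (N k) = -(∑' j, δ (j+(k+1)) * eta a q (N (j+(k+1)))) := by
      linarith
    rw [this, abs_neg]
    exact htail'
  have hinv2 : ((q (N (k+1) + 1) : ℝ))⁻¹ ≤ (8 * (q (N k + 2) : ℝ))⁻¹ :=
    inv_anti₀ (by positivity) hQk1
  have hfin : ((q (N k + 2) : ℝ))⁻¹ ≤ 2 * (8 * (q (N k + 2) : ℝ))⁻¹ := by
    rw [habs_k] at hcontra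
    linarith
  rw [mul_inv] at hfin
  have : (0:ℝ) < ((q (N k + 2) : ℝ))⁻¹ := by positivity
  nlinarith

end NFacts4

end Stmt5Aux

/-- `G₁(q)` inside the circle `ℝ/ℤ`; the norm on `AddCircle (1:ℝ)` is the
distance to the nearest integer. -/
noncomputable def G1 (q : ℕ → ℕ) : Set (AddCircle (1:ℝ)) :=
  {t | Summable (fun n => ‖q n • t‖)}

/-- If `q` is the principal denominator sequence of an irrational `α ∈ (0,1)`
(with continued fraction partial quotients `aₙ ≥ 1`) and `sup_n qₙ₊₁/qₙ = ∞`,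
then `G₁(q)` is uncountable. -/
theorem stmt5 (a q : ℕ → ℕ) (ha : ∀ n, 1 ≤ n → 1 ≤ a n)
    (hq0 : q 0 = 1) (hq1 : q 1 = a 1)
    (hrec : ∀ n, q (n + 2) = a (n + 2) * q (n + 1) + q n)
    (hsup : ∀ M : ℕ, ∃ n, M * q n ≤ q (n + 1)) :
    ¬ (G1 q).Countable := by
  intro hc
  have H : Stmt5Aux.Hyp a q := ⟨ha, hq0, hq1, hrec⟩
  obtain ⟨N, hN1, hN2⟩ := Stmt5Aux.exists_N H hsup
  set F : (ℕ → Bool) → AddCircle (1:ℝ) :=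
    fun ε => ((Stmt5Aux.xe a q N ε : ℝ) : AddCircle (1:ℝ)) with hF
  have hinj : Function.Injective F := Stmt5Aux.xe_inj H hN1 hN2
  have hrange : Set.range F ⊆ G1 q := by
    rintro t ⟨ε, rfl⟩
    exact Stmt5Aux.mem_G1_aux H hN1 hN2 ε
  have hcr : (Set.range F).Countable := hc.mono hrange
  have hsub : Countable (Set.range F) := hcr.to_subtype
  have hcount : Countable (ℕ → Bool) :=
    Countable.of_equiv _ (Equiv.ofInjective F hinj).symm
  have h2 : Countable (Set ℕ) :=
    Countable.of_equiv _ (Equiv.arrowCongr (Equiv.refl ℕ) Equiv.propEquivBool.symm)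
  obtain ⟨f, hf⟩ := (countable_iff_exists_injective (Set ℕ)).1 h2
  exact Function.cantor_injective f hf
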